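/- Let f be complex analytic on a neighborhood of (0,0) ∈ ℂ × ℂ, let α : ℂ → ℂ be analytic near 0 with α(0) = 0, and let e ≥ 1 be a natural number. Assume there exists u₁ ∈ ℂ such that the functions y ↦ f_x(α(y) + u₁ y^e, y) and y ↦ f_y(α(y) + u₁ y^e, y) do not both vanish identically near 0. Then there exist L ∈ ℕ and a closed discrete subset S ⊆ ℂ such that for every u ∈ ℂ: min( ord₀(y ↦ f_x(α(y) + u y^e, y)), ord₀(y ↦ f_y(α(y) + u y^e, y)) ) ≥ L, with equality for every u ∉ S. (In other words, for generic u ∈ ℂ the order of the gradient of f along the perturbed arc α(y) + u y^e is the same number L.) -/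

import Mathlib

open Filter

/-- The vanishing order at `0` of a function `u : ℂ → ℂ`: the least `n` such that the
`n`-th Taylor coefficient of `u` at `0` is nonzero, in `ℕ∞` (`⊤` if none is). -/
noncomputable def ord₀ (u : ℂ → ℂ) : ℕ∞ :=
  sInf ((fun n : ℕ => (n : ℕ∞)) '' {n : ℕ | iteratedDeriv n u 0 ≠ 0})

/- STATEMENT 6: Let `f` be analytic near `(0,0)`, `α` analytic near `0` with `α(0)=0`,
and `e ≥ 1`. If for some `u₁` the two functions `y ↦ f_x(α(y)+u₁ yᵉ, y)` and
`y ↦ f_y(α(y)+u₁ yᵉ, y)` do not both vanish identically near `0`, then there are `L ∈ ℕ`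
and a closed discrete set `S ⊆ ℂ` such that for every `u` the minimum of the vanishing
orders of `y ↦ f_x(α(y)+u yᵉ, y)` and `y ↦ f_y(α(y)+u yᵉ, y)` is `≥ L`, with equality for
every `u ∉ S` (so for generic `u` the order of the gradient along the perturbed arc is `L`). -/

/-- Aux: for `h` analytic at `0`, vanishing near `0` iff all iterated derivatives vanish. -/
lemma ev_zero_iff_iteratedDeriv {h : ℂ → ℂ} (hh : AnalyticAt ℂ h 0) :
    (∀ᶠ y in nhds (0 : ℂ), h y = 0) ↔ ∀ n, iteratedDeriv n h 0 = 0 := by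
  constructor
  · intro hev n
    have h1 : h =ᶠ[nhds (0 : ℂ)] (fun _ => (0 : ℂ)) := hev
    rw [h1.iteratedDeriv_eq n]
    simp [iteratedDeriv_eq_iteratedFDeriv, iteratedFDeriv_zero_fun]
  · intro hz
    obtain ⟨p, hp⟩ := hh
    obtain ⟨r, hpr⟩ := hp
    have hcoeff : ∀ n, (p n fun _ => (1 : ℂ)) = 0 := by
      intro n
      have := hpr.factorial_smul (1 : ℂ) n
      rw [← iteratedDeriv_eq_iteratedFDeriv, hz n, smul_eq_zero] at this
      rcases this with h' | h'
      · exact absurd h' (Nat.factorial_ne_zero n)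
      · exact h'
    have hterm : ∀ n (y : ℂ), (p n fun _ => y) = 0 := by
      intro n y
      have : (p n fun _ => y • (1 : ℂ)) = (∏ _i : Fin n, y) • p n fun _ => (1 : ℂ) :=
        (p n).map_smul_univ (fun _ => y) (fun _ => 1)
      simpa [hcoeff n] using this
    have hr : Metric.eball (0 : ℂ) r ∈ nhds (0 : ℂ) := Metric.eball_mem_nhds 0 hpr.r_pos
    filter_upwards [hr] with y hy
    have hs := hpr.hasSum (y := y) (by simpa using hy)
    simp only [hterm] at hs
    have := hs.unique hasSum_zero
    simpa using this

/-- Iterated partial derivative in the second variable. -/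
noncomputable def Gseq (g : ℂ × ℂ → ℂ) : ℕ → ℂ × ℂ → ℂ
  | 0 => g
  | k + 1 => fun p => fderiv ℂ (Gseq g k) p (0, 1)

lemma Gseq_analytic {g : ℂ × ℂ → ℂ} (hg : ∀ u : ℂ, AnalyticAt ℂ g (u, 0)) (k : ℕ) :
    ∀ u : ℂ, AnalyticAt ℂ (Gseq g k) (u, 0) := by
  induction k with
  | zero => exact hg
  | succ k ih =>
    intro u
    exact ((ContinuousLinearMap.apply ℂ ℂ (((0 : ℂ), (1 : ℂ)))).analyticAt _).comp (ih u).fderiv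

lemma Gseq_spec {g : ℂ × ℂ → ℂ} (hg : ∀ u : ℂ, AnalyticAt ℂ g (u, 0)) (k : ℕ) (u : ℂ) :
    ∀ᶠ y in nhds (0 : ℂ), iteratedDeriv k (fun y' => g (u, y')) y = Gseq g k (u, y) := by
  induction k with
  | zero => exact Eventually.of_forall fun y => by simp [Gseq, iteratedDeriv_zero]
  | succ k ih =>
    have htend : Tendsto (fun y : ℂ => ((u, y) : ℂ × ℂ)) (nhds 0) (nhds (u, 0)) := by
      have : Continuous (fun y : ℂ => ((u, y) : ℂ × ℂ)) := by fun_prop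
      simpa using this.continuousAt.tendsto
    have h1 : ∀ᶠ y in nhds (0 : ℂ), AnalyticAt ℂ (Gseq g k) (u, y) :=
      htend.eventually (Gseq_analytic hg k u).eventually_analyticAt
    filter_upwards [ih.eventually_nhds, h1] with y hy hya
    rw [iteratedDeriv_succ]
    have hde : deriv (iteratedDeriv k fun y' => g (u, y')) y
        = deriv (fun y' => Gseq g k (u, y')) y := Filter.EventuallyEq.deriv_eq hy
    rw [hde]
    have h3 : HasDerivAt (fun y' : ℂ => ((u, y') : ℂ × ℂ)) ((0 : ℂ), (1 : ℂ)) y :=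
      HasDerivAt.prodMk (hasDerivAt_const y u) (hasDerivAt_id y)
    have hd : HasDerivAt (fun y' => Gseq g k (u, y'))
        (fderiv ℂ (Gseq g k) (u, y) (0, 1)) y :=
      (hya.differentiableAt.hasFDerivAt).comp_hasDerivAt y h3
    rw [hd.deriv]
    rfl
lemma ord₀_ge {w : ℂ → ℂ} {L : ℕ} (hw : ∀ n < L, iteratedDeriv n w 0 = 0) :
    (L : ℕ∞) ≤ ord₀ w := by
  apply le_sInf
  rintro x ⟨n, hn, rfl⟩
  simp only [Set.mem_setOf_eq] at hn
  have : L ≤ n := not_lt.1 fun h => hn (hw n h)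
  show (L : ℕ∞) ≤ (n : ℕ∞)
  exact_mod_cast this

lemma ord₀_le {w : ℂ → ℂ} {L : ℕ} (hw : iteratedDeriv L w 0 ≠ 0) : ord₀ w ≤ (L : ℕ∞) :=
  sInf_le ⟨L, hw, rfl⟩

theorem generic_gradient_order_of_perturbed_arc
    (f : ℂ × ℂ → ℂ) (hf : AnalyticAt ℂ f (0, 0))
    (α : ℂ → ℂ) (hα : AnalyticAt ℂ α 0) (hα0 : α 0 = 0)
    (e : ℕ) (he : 1 ≤ e)
    (hne : ∃ u₁ : ℂ,
      ¬ ((∀ᶠ y in nhds (0 : ℂ), fderiv ℂ f (α y + u₁ * y ^ e, y) (1, 0) = 0) ∧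
         (∀ᶠ y in nhds (0 : ℂ), fderiv ℂ f (α y + u₁ * y ^ e, y) (0, 1) = 0))) :
    ∃ (L : ℕ) (S : Set ℂ), IsClosed S ∧ DiscreteTopology S ∧
      (∀ u : ℂ, (L : ℕ∞) ≤
        min (ord₀ (fun y => fderiv ℂ f (α y + u * y ^ e, y) (1, 0)))
            (ord₀ (fun y => fderiv ℂ f (α y + u * y ^ e, y) (0, 1)))) ∧
      (∀ u ∉ S,
        min (ord₀ (fun y => fderiv ℂ f (α y + u * y ^ e, y) (1, 0)))
            (ord₀ (fun y => fderiv ℂ f (α y + u * y ^ e, y) (0, 1))) = (L : ℕ∞)) := by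
  classical
  set φ : ℂ × ℂ → ℂ × ℂ := fun p => (α p.2 + p.1 * p.2 ^ e, p.2) with hφdef
  have hφval : ∀ u : ℂ, φ (u, 0) = ((0 : ℂ), (0 : ℂ)) := by
    intro u
    simp [hφdef, hα0, zero_pow (Nat.one_le_iff_ne_zero.mp he)]
  have hφa : ∀ u : ℂ, AnalyticAt ℂ φ (u, 0) := by
    intro u
    apply AnalyticAt.prod
    · exact (hα.comp_of_eq analyticAt_snd rfl).add (analyticAt_fst.mul (analyticAt_snd.pow e))
    · exact analyticAt_snd
  have hfd : ∀ (v : ℂ × ℂ) (u : ℂ),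
      AnalyticAt ℂ (fun p : ℂ × ℂ => fderiv ℂ f (φ p) v) (u, 0) := by
    intro v u
    have h1 : AnalyticAt ℂ (fderiv ℂ f) (φ (u, 0)) := by
      rw [hφval u]; exact hf.fderiv
    exact ((ContinuousLinearMap.apply ℂ ℂ v).analyticAt _).comp (h1.comp (hφa u))
  set g : ℂ × ℂ → ℂ := fun p => fderiv ℂ f (φ p) (1, 0) with hgdef
  set h : ℂ × ℂ → ℂ := fun p => fderiv ℂ f (φ p) (0, 1) with hhdef
  have hg : ∀ u : ℂ, AnalyticAt ℂ g (u, 0) := hfd (1, 0)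
  have hh : ∀ u : ℂ, AnalyticAt ℂ h (u, 0) := hfd (0, 1)
  set c : ℕ → ℂ → ℂ := fun n u => Gseq g n (u, 0) with hcdef
  set d : ℕ → ℂ → ℂ := fun n u => Gseq h n (u, 0) with hddef
  have hline : ∀ u : ℂ, AnalyticAt ℂ (fun v : ℂ => ((u, v) : ℂ × ℂ)) 0 :=
    fun u => analyticAt_const.prod analyticAt_id
  have hca : ∀ n (u : ℂ), AnalyticAt ℂ (c n) u := by
    intro n u
    have hmk : AnalyticAt ℂ (fun u' : ℂ => ((u', (0 : ℂ)) : ℂ × ℂ)) u :=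
      analyticAt_id.prod analyticAt_const
    exact (Gseq_analytic hg n u).comp_of_eq hmk rfl
  have hda : ∀ n (u : ℂ), AnalyticAt ℂ (d n) u := by
    intro n u
    have hmk : AnalyticAt ℂ (fun u' : ℂ => ((u', (0 : ℂ)) : ℂ × ℂ)) u :=
      analyticAt_id.prod analyticAt_const
    exact (Gseq_analytic hh n u).comp_of_eq hmk rfl
  have hcu : ∀ n (u : ℂ), iteratedDeriv n (fun y => g (u, y)) 0 = c n u :=
    fun n u => (Gseq_spec hg n u).self_of_nhds
  have hdu : ∀ n (u : ℂ), iteratedDeriv n (fun y => h (u, y)) 0 = d n u :=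
    fun n u => (Gseq_spec hh n u).self_of_nhds
  have hga : ∀ u : ℂ, AnalyticAt ℂ (fun y => g (u, y)) 0 :=
    fun u => (hg u).comp (hline u)
  have hha : ∀ u : ℂ, AnalyticAt ℂ (fun y => h (u, y)) 0 :=
    fun u => (hh u).comp (hline u)
  -- the set of levels where some coefficient is nonzero
  set N : Set ℕ := {n | (∃ u : ℂ, c n u ≠ 0) ∨ (∃ u : ℂ, d n u ≠ 0)} with hNdef
  have hN : N.Nonempty := by
    obtain ⟨u₁, hu₁⟩ := hne
    rw [not_and_or] at hu₁
    rcases hu₁ with hu₁ | hu₁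
    · have : ¬ ∀ n, iteratedDeriv n (fun y => g (u₁, y)) 0 = 0 := by
        intro hz
        exact hu₁ ((ev_zero_iff_iteratedDeriv (hga u₁)).mpr hz)
      push_neg at this
      obtain ⟨n, hn⟩ := this
      exact ⟨n, Or.inl ⟨u₁, fun h0 => hn ((hcu n u₁).trans h0)⟩⟩
    · have : ¬ ∀ n, iteratedDeriv n (fun y => h (u₁, y)) 0 = 0 := by
        intro hz
        exact hu₁ ((ev_zero_iff_iteratedDeriv (hha u₁)).mpr hz)
      push_neg at this
      obtain ⟨n, hn⟩ := this
      exact ⟨n, Or.inr ⟨u₁, fun h0 => hn ((hdu n u₁).trans h0)⟩⟩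
  set L : ℕ := sInf N with hLdef
  have hLmem : L ∈ N := Nat.sInf_mem hN
  have hlow : ∀ n < L, ∀ u : ℂ, c n u = 0 ∧ d n u = 0 := by
    intro n hn u
    have : n ∉ N := Nat.notMem_of_lt_sInf hn
    rw [hNdef] at this
    simp only [Set.mem_setOf_eq] at this
    push_neg at this
    exact ⟨this.1 u, this.2 u⟩
  set S : Set ℂ := {u | c L u = 0 ∧ d L u = 0} with hSdef
  -- the nontrivial coefficient at level L
  obtain ⟨e₀, he₀a, he₀S, he₀ne⟩ :
      ∃ e₀ : ℂ → ℂ, (∀ u, AnalyticAt ℂ e₀ u) ∧ (∀ u ∈ S, e₀ u = 0) ∧ ∃ u, e₀ u ≠ 0 := by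
    rcases hLmem with h1 | h1
    · exact ⟨c L, hca L, fun u hu => hu.1, h1⟩
    · exact ⟨d L, hda L, fun u hu => hu.2, h1⟩
  have hSclosed : IsClosed S := by
    have h1 : IsClosed {u : ℂ | c L u = 0} :=
      isClosed_singleton.preimage (continuous_iff_continuousAt.2 fun u => (hca L u).continuousAt)
    have h2 : IsClosed {u : ℂ | d L u = 0} :=
      isClosed_singleton.preimage (continuous_iff_continuousAt.2 fun u => (hda L u).continuousAt)
    exact h1.inter h2
  have hSdisc : DiscreteTopology S := by
    rw [discreteTopology_subtype_iff]
    intro s hs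
    have h1 : ¬ (∀ᶠ z in nhds s, e₀ z = 0) := by
      intro hev
      obtain ⟨u₀, hu₀⟩ := he₀ne
      have hE : AnalyticOnNhd ℂ e₀ Set.univ := fun x _ => he₀a x
      exact hu₀ (hE.eqOn_zero_of_preconnected_of_eventuallyEq_zero isPreconnected_univ
        (Set.mem_univ s) hev (Set.mem_univ u₀))
    have h2 : ∀ᶠ z in nhdsWithin s {s}ᶜ, e₀ z ≠ 0 :=
      ((he₀a s).eventually_eq_zero_or_eventually_ne_zero).resolve_left h1
    rw [← Filter.eventually_false_iff_eq_bot]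
    have h3 : ∀ᶠ z in nhdsWithin s {s}ᶜ ⊓ Filter.principal S, e₀ z ≠ 0 :=
      h2.filter_mono inf_le_left
    have h4 : ∀ᶠ z in nhdsWithin s {s}ᶜ ⊓ Filter.principal S, z ∈ S :=
      Filter.eventually_inf_principal.2 (Eventually.of_forall fun z hz => hz)
    exact (h3.and h4).mono fun z hz => hz.1 (he₀S z hz.2)
  refine ⟨L, S, hSclosed, hSdisc, ?_, ?_⟩
  · intro u
    apply le_min
    · exact ord₀_ge fun n hn => (hcu n u).trans (hlow n hn u).1
    · exact ord₀_ge fun n hn => (hdu n u).trans (hlow n hn u).2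
  · intro u hu
    have hlow' : (L : ℕ∞) ≤
        min (ord₀ (fun y => fderiv ℂ f (α y + u * y ^ e, y) (1, 0)))
            (ord₀ (fun y => fderiv ℂ f (α y + u * y ^ e, y) (0, 1))) := by
      apply le_min
      · exact ord₀_ge fun n hn => (hcu n u).trans (hlow n hn u).1
      · exact ord₀_ge fun n hn => (hdu n u).trans (hlow n hn u).2
    refine le_antisymm ?_ hlow'
    rw [hSdef] at hu
    simp only [Set.mem_setOf_eq, not_and_or] at hu
    rcases hu with hu | hu
    · exact min_le_of_left_le (ord₀_le fun h0 => hu ((hcu L u).symm.trans h0))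
    · exact min_le_of_right_le (ord₀_le fun h0 => hu ((hdu L u).symm.trans h0))
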